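/- Let Ω ⊆ ℝ² be open with x ≠ 0 at every point (x,y) ∈ Ω, and let f : Ω → ℝ be C² satisfying f_xx + f_yy − f_x/x = 0 on Ω (subscripts denote partial derivatives). Then the 1-form ((f_y² − f_x²)/(2x)) dx + (−f_x f_y/x) dy is closed on Ω, i.e. ∂_y((f_y² − f_x²)/(2x)) = ∂_x(−f_x f_y/x) on Ω. -/

import Mathlib

/-- Partial derivative with respect to the first coordinate of `ℝ × ℝ`. -/
noncomputable def pdx (f : ℝ × ℝ → ℝ) (p : ℝ × ℝ) : ℝ := fderiv ℝ f p (1, 0)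

/-- Partial derivative with respect to the second coordinate of `ℝ × ℝ`. -/
noncomputable def pdy (f : ℝ × ℝ → ℝ) (p : ℝ × ℝ) : ℝ := fderiv ℝ f p (0, 1)

/-- **Integrability condition for the conformal factor of the van Stockum
metric.**  If `f` is C² on an open set `Ω ⊆ {x ≠ 0}` and satisfies
`f_xx + f_yy − f_x/x = 0` on `Ω`, then the 1-form
`((f_y² − f_x²)/(2x)) dx + (−f_x f_y/x) dy` is closed on `Ω`. -/
theorem conformal_factor_integrability
    (Ω : Set (ℝ × ℝ)) (hΩ : IsOpen Ω) (hx : ∀ p ∈ Ω, p.1 ≠ 0)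
    (f : ℝ × ℝ → ℝ) (hf : ContDiffOn ℝ 2 f Ω)
    (hfeq : ∀ p ∈ Ω, pdx (pdx f) p + pdy (pdy f) p - pdx f p / p.1 = 0) :
    ∀ p ∈ Ω,
      pdy (fun q => ((pdy f q) ^ 2 - (pdx f q) ^ 2) / (2 * q.1)) p =
      pdx (fun q => -(pdx f q * pdy f q) / q.1) p := by
  intro p hp
  have hx0 : p.1 ≠ 0 := hx p hp
  have hx2 : (2 : ℝ) * p.1 ≠ 0 := by simpa using hx0
  have hΩp : Ω ∈ nhds p := hΩ.mem_nhds hp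
  have hfd : ∀ᶠ q in nhds p, HasFDerivAt f (fderiv ℝ f q) q := by
    filter_upwards [hΩp] with q hq
    exact ((hf.differentiableOn (by norm_num)).differentiableAt (hΩ.mem_nhds hq)).hasFDerivAt
  have hF1 : ContDiffOn ℝ 1 (fderiv ℝ f) Ω := hf.fderiv_of_isOpen hΩ (by norm_num)
  have hFd : DifferentiableAt ℝ (fderiv ℝ f) p :=
    (hF1.differentiableOn (by norm_num)).differentiableAt hΩp
  set B := fderiv ℝ (fderiv ℝ f) p with hBdef
  have hFB : HasFDerivAt (fderiv ℝ f) B p := hFd.hasFDerivAt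
  have hsymm : ∀ v w, B v w = B w v := second_derivative_symmetric_of_eventually hfd hFB
  have hu : HasFDerivAt (fun q => fderiv ℝ f q (1, 0)) (B.flip (1, 0)) p := by
    have h := hFB.clm_apply (hasFDerivAt_const ((1:ℝ), (0:ℝ)) p)
    simpa using h
  have hv : HasFDerivAt (fun q => fderiv ℝ f q (0, 1)) (B.flip (0, 1)) p := by
    have h := hFB.clm_apply (hasFDerivAt_const ((0:ℝ), (1:ℝ)) p)
    simpa using h
  -- derivative of (2*q.1)⁻¹ and q.1⁻¹
  have h2x : HasFDerivAt (fun q : ℝ × ℝ => 2 * q.1)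
      ((2:ℝ) • ContinuousLinearMap.fst ℝ ℝ ℝ) p := hasFDerivAt_fst.const_mul 2
  have hinv2 : HasFDerivAt (fun q : ℝ × ℝ => (2 * q.1)⁻¹)
      ((-ContinuousLinearMap.mulLeftRight ℝ ℝ (2*p.1)⁻¹ (2*p.1)⁻¹).comp
        ((2:ℝ) • ContinuousLinearMap.fst ℝ ℝ ℝ)) p :=
    (hasFDerivAt_inv' hx2).comp p h2x
  have hinv1 : HasFDerivAt (fun q : ℝ × ℝ => (q.1)⁻¹)
      ((-ContinuousLinearMap.mulLeftRight ℝ ℝ (p.1)⁻¹ (p.1)⁻¹).comp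
        (ContinuousLinearMap.fst ℝ ℝ ℝ)) p :=
    (hasFDerivAt_inv' hx0).comp p hasFDerivAt_fst
  have hg := (((hv.mul hv)).sub ((hu.mul hu))).mul hinv2
  have hh := ((hu.mul hv).neg).mul hinv1
  unfold pdy pdx
  simp only [div_eq_mul_inv, pow_two]
  simp only [Pi.mul_def, Pi.sub_def, Pi.neg_def] at hg hh
  rw [hg.fderiv, hh.fderiv]
  simp only [ContinuousLinearMap.add_apply, ContinuousLinearMap.smul_apply,
    ContinuousLinearMap.sub_apply, ContinuousLinearMap.comp_apply,
    ContinuousLinearMap.flip_apply, ContinuousLinearMap.coe_fst',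
    ContinuousLinearMap.mulLeftRight_apply, ContinuousLinearMap.neg_apply,
    smul_eq_mul, ContinuousLinearMap.coe_smul', Pi.smul_apply]
  have e := hfeq p hp
  unfold pdx pdy at e
  rw [hu.fderiv, hv.fderiv] at e
  simp only [ContinuousLinearMap.flip_apply] at e
  rw [hsymm (0,1) (1,0)]
  field_simp at e ⊢
  ring_nf
  ring_nf at e
  linear_combination (2 * (fderiv ℝ f p (0,1))) * e
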